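/- If A and B are m×n matrices satisfying AB* = BA* and A*B = B*A, then there exist a unitary m×m matrix U and a unitary n×n matrix V such that U*AV and U*BV are both (rectangular) diagonal matrices. -/

import Mathlib

open Matrix


/-- Commuting pair, one Hermitian and nonzero: joint eigenvector with nonzero
eigenvalue for the Hermitian one. -/
lemma exists_joint_eigvec {ι : Type*} [Fintype ι] [DecidableEq ι] (M N : Matrix ι ι ℂ)
    (hM : M.IsHermitian) (hMN : M * N = N * M) (hM0 : M ≠ 0) :
    ∃ (w : ι → ℂ) (t μ : ℂ), t ≠ 0 ∧ w ≠ 0 ∧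
      M *ᵥ w = t • w ∧ N *ᵥ w = μ • w := by
  obtain ⟨v, t, ht, hv0, hMv⟩ := hM.exists_eigenvector_of_ne_zero hM0
  have hMv' : M *ᵥ v = (t : ℂ) • v := by
    rw [hMv]; funext i; simp [Complex.real_smul]
  set f : Module.End ℂ (ι → ℂ) := M.mulVecLin with hf
  set g : Module.End ℂ (ι → ℂ) := N.mulVecLin with hg
  set E := Module.End.eigenspace f (t : ℂ) with hE
  have hvE : v ∈ E := by
    rw [hE, Module.End.mem_eigenspace_iff]; exact hMv'
  have hinv : ∀ x ∈ E, g x ∈ E := by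
    intro x hx
    rw [Module.End.mem_eigenspace_iff] at hx ⊢
    have : f (g x) = g (f x) := by
      simp only [hf, hg, Matrix.mulVecLin_apply, Matrix.mulVec_mulVec, hMN]
    rw [this, hx, _root_.map_smul]
  haveI : Nontrivial E := nontrivial_of_ne ⟨v, hvE⟩ 0 (by simpa using hv0)
  obtain ⟨μ, hμ⟩ := Module.End.exists_eigenvalue (g.restrict hinv)
  obtain ⟨w', hw'⟩ := hμ.exists_hasEigenvector
  refine ⟨(w' : ι → ℂ), (t : ℂ), μ, by exact_mod_cast ht, by simpa using hw'.2, ?_, ?_⟩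
  · have := w'.2
    rw [Module.End.mem_eigenspace_iff] at this
    simpa [hf] using this
  · have := hw'.apply_eq_smul
    have h2 := congrArg (Subtype.val) this
    simpa [hg, LinearMap.restrict_apply] using h2
lemma exists_joint_pair {m n : ℕ} (A B : Matrix (Fin m) (Fin n) ℂ)
    (h1 : A * Bᴴ = B * Aᴴ) (h2 : Aᴴ * B = Bᴴ * A) (hA : A ≠ 0) :
    ∃ (x : Fin m → ℂ) (y : Fin n → ℂ) (a b c d : ℂ), x ≠ 0 ∧ y ≠ 0 ∧
      A *ᵥ y = a • x ∧ B *ᵥ y = b • x ∧ Aᴴ *ᵥ x = c • y ∧ Bᴴ *ᵥ x = d • y := by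
  classical
  set M : Matrix (Fin m ⊕ Fin n) (Fin m ⊕ Fin n) ℂ := fromBlocks 0 A Aᴴ 0 with hMdef
  set N : Matrix (Fin m ⊕ Fin n) (Fin m ⊕ Fin n) ℂ := fromBlocks 0 B Bᴴ 0 with hNdef
  have hMherm : M.IsHermitian := by
    rw [Matrix.IsHermitian, hMdef, fromBlocks_conjTranspose]
    simp
  have hcomm : M * N = N * M := by
    rw [hMdef, hNdef, fromBlocks_multiply, fromBlocks_multiply]
    simp [h1, h2]
  have hM0 : M ≠ 0 := by
    intro h
    apply hA
    have : M.toBlocks₁₂ = A := rfl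
    rw [h] at this
    exact this.symm.trans (by ext i j; rfl)
  obtain ⟨w, t, μ, ht, hw0, hMw, hNw⟩ := exists_joint_eigvec M N hMherm hcomm hM0
  set x : Fin m → ℂ := fun i => w (Sum.inl i) with hx
  set y : Fin n → ℂ := fun j => w (Sum.inr j) with hy
  have hwelim : w = Sum.elim x y := by funext i; cases i <;> rfl
  have hMw' := hMw
  rw [hwelim, hMdef, fromBlocks_mulVec] at hMw'
  have hNw' := hNw
  rw [hwelim, hNdef, fromBlocks_mulVec] at hNw'
  have hAy : A *ᵥ y = t • x := by
    funext i
    have h := congrFun hMw' (Sum.inl i)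
    simpa using h
  have hAx : Aᴴ *ᵥ x = t • y := by
    funext j
    have h := congrFun hMw' (Sum.inr j)
    simpa using h
  have hBy : B *ᵥ y = μ • x := by
    funext i
    have h := congrFun hNw' (Sum.inl i)
    simpa using h
  have hBx : Bᴴ *ᵥ x = μ • y := by
    funext j
    have h := congrFun hNw' (Sum.inr j)
    simpa using h
  have hx0 : x ≠ 0 := by
    intro h
    apply hw0
    have hy0 : y = 0 := by
      have : Aᴴ *ᵥ x = 0 := by rw [h]; simp
      rw [hAx] at this
      exact (smul_eq_zero.mp this).resolve_left ht
    rw [hwelim, h, hy0]; funext i; cases i <;> rfl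
  have hy0 : y ≠ 0 := by
    intro h
    apply hw0
    have hx0' : x = 0 := by
      have : A *ᵥ y = 0 := by rw [h]; simp
      rw [hAy] at this
      exact (smul_eq_zero.mp this).resolve_left ht
    rw [hwelim, h, hx0']; funext i; cases i <;> rfl
  exact ⟨x, y, t, μ, t, μ, hx0, hy0, hAy, hBy, hAx, hBx⟩

lemma exists_unitary_col {k : ℕ} (x : Fin (k + 1) → ℂ) (hx : x ≠ 0) :
    ∃ (U : Matrix.unitaryGroup (Fin (k + 1)) ℂ) (c : ℂ), c ≠ 0 ∧
      ∀ i, (U : Matrix (Fin (k + 1)) (Fin (k + 1)) ℂ) i 0 = c * x i := by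
  classical
  set X : EuclideanSpace ℂ (Fin (k + 1)) := WithLp.toLp 2 x with hX
  have hX0 : X ≠ 0 := by
    intro h; apply hx; have := congrArg (WithLp.ofLp (p := 2)) h; simpa [hX] using this
  have hnorm : ‖X‖ ≠ 0 := norm_ne_zero_iff.mpr hX0
  set u : EuclideanSpace ℂ (Fin (k + 1)) := (‖X‖⁻¹ : ℂ) • X with hu
  have hu0 : u ≠ 0 := smul_ne_zero (by simpa using hnorm) hX0
  have hunorm : ‖u‖ = 1 := by
    rw [hu, norm_smul]
    simp [hnorm]
  set W := (ℂ ∙ u)ᗮ with hW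
  have hdim : Module.finrank ℂ W = k := by
    apply Submodule.finrank_add_finrank_orthogonal'
    rw [finrank_span_singleton hu0]
    simp [add_comm]
  set b : OrthonormalBasis (Fin k) ℂ W := (stdOrthonormalBasis ℂ W).reindex (finCongr hdim)
    with hb
  set cols : Fin (k + 1) → EuclideanSpace ℂ (Fin (k + 1)) :=
    Fin.cons u (fun i => (b i : EuclideanSpace ℂ (Fin (k + 1)))) with hcols
  have horth : ∀ i j, (inner ℂ (cols i) (cols j) : ℂ) = if i = j then 1 else 0 := by
    intro i j
    refine Fin.cases ?_ ?_ i
    · refine Fin.cases ?_ ?_ j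
      · simp only [hcols, Fin.cons_zero, if_pos rfl]
        rw [inner_self_eq_norm_sq_to_K, hunorm]
        norm_num
      · intro j'
        simp only [hcols, Fin.cons_zero, Fin.cons_succ]
        rw [if_neg (Fin.succ_ne_zero j').symm]
        have := (b j').2
        exact (Submodule.mem_orthogonal _ _).mp this u (Submodule.mem_span_singleton_self u)
    · intro i'
      refine Fin.cases ?_ ?_ j
      · simp only [hcols, Fin.cons_zero, Fin.cons_succ]
        rw [if_neg (Fin.succ_ne_zero i')]
        rw [← inner_conj_symm]
        have := (b i').2
        rw [(Submodule.mem_orthogonal _ _).mp this u (Submodule.mem_span_singleton_self u)]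
        simp
      · intro j'
        simp only [hcols, Fin.cons_succ]
        rw [← Submodule.coe_inner]
        rw [orthonormal_iff_ite.mp b.orthonormal]
        simp [Fin.succ_inj]
  set U : Matrix (Fin (k + 1)) (Fin (k + 1)) ℂ := Matrix.of fun i j => cols j i with hU
  have hUmem : U ∈ Matrix.unitaryGroup (Fin (k + 1)) ℂ := by
    rw [Matrix.mem_unitaryGroup_iff']
    ext i j
    rw [Matrix.mul_apply, Matrix.one_apply]
    have : ∀ l, (star U) i l * U l j = (starRingEnd ℂ) (cols i l) * cols j l := by
      intro l
      simp [hU, Matrix.star_eq_conjTranspose, Matrix.conjTranspose_apply]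
    rw [Finset.sum_congr rfl fun l _ => this l]
    have h := horth i j
    rw [PiLp.inner_apply] at h
    simp only [RCLike.inner_apply] at h
    simpa only [mul_comm] using h
  refine ⟨⟨U, hUmem⟩, (‖X‖⁻¹ : ℂ), by simpa using hnorm, fun i => ?_⟩
  show cols 0 i = _
  simp only [hcols, Fin.cons_zero, hu]
  rfl

/-- Extend a `k × k` matrix to `(k+1) × (k+1)` by putting a `1` in the corner. -/
def oneExt {k : ℕ} (P : Matrix (Fin k) (Fin k) ℂ) : Matrix (Fin (k + 1)) (Fin (k + 1)) ℂ :=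
  Matrix.of fun i j =>
    Fin.cases (Fin.cases (1 : ℂ) (fun _ => 0) j)
      (fun i' => Fin.cases (0 : ℂ) (fun j' => P i' j') j) i

@[simp] lemma oneExt_zero_zero {k : ℕ} (P : Matrix (Fin k) (Fin k) ℂ) :
    oneExt P 0 0 = 1 := rfl

@[simp] lemma oneExt_zero_succ {k : ℕ} (P : Matrix (Fin k) (Fin k) ℂ) (j : Fin k) :
    oneExt P 0 j.succ = 0 := by simp [oneExt]

@[simp] lemma oneExt_succ_zero {k : ℕ} (P : Matrix (Fin k) (Fin k) ℂ) (i : Fin k) :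
    oneExt P i.succ 0 = 0 := by simp [oneExt]

@[simp] lemma oneExt_succ_succ {k : ℕ} (P : Matrix (Fin k) (Fin k) ℂ) (i j : Fin k) :
    oneExt P i.succ j.succ = P i j := by simp [oneExt]

lemma oneExt_mem {k : ℕ} (P : Matrix (Fin k) (Fin k) ℂ)
    (hP : P ∈ Matrix.unitaryGroup (Fin k) ℂ) :
    oneExt P ∈ Matrix.unitaryGroup (Fin (k + 1)) ℂ := by
  rw [Matrix.mem_unitaryGroup_iff']
  have hP' : Pᴴ * P = 1 := by
    rw [Matrix.mem_unitaryGroup_iff'] at hP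
    simpa [Matrix.star_eq_conjTranspose] using hP
  ext i j
  rw [Matrix.mul_apply]
  simp only [Matrix.star_eq_conjTranspose, Matrix.conjTranspose_apply]
  rw [Fin.sum_univ_succ]
  refine Fin.cases ?_ (fun i' => ?_) i <;> refine Fin.cases ?_ (fun j' => ?_) j
  · simp
  · simp [Matrix.one_apply, (Fin.succ_ne_zero j').symm]
  · simp [Matrix.one_apply, Fin.succ_ne_zero i']
  · simp only [oneExt_succ_succ, oneExt_zero_succ, map_zero, zero_mul, zero_add]
    have := congrFun (congrFun hP' i') j'
    rw [Matrix.mul_apply] at this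
    simp only [Matrix.conjTranspose_apply] at this
    rw [this]
    simp [Matrix.one_apply, Fin.succ_inj]

lemma assemble {m' n' : ℕ} (C : Matrix (Fin (m' + 1)) (Fin (n' + 1)) ℂ)
    (P : Matrix (Fin m') (Fin m') ℂ) (Q : Matrix (Fin n') (Fin n') ℂ)
    (hcol : ∀ i, i ≠ 0 → C i 0 = 0) (hrow : ∀ j, j ≠ 0 → C 0 j = 0)
    (hPQ : ∀ (i : Fin m') (j : Fin n'), (i : ℕ) ≠ (j : ℕ) →
      (Pᴴ * C.submatrix Fin.succ Fin.succ * Q) i j = 0) :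
    ∀ (i : Fin (m' + 1)) (j : Fin (n' + 1)), (i : ℕ) ≠ (j : ℕ) →
      ((oneExt P)ᴴ * C * oneExt Q) i j = 0 := by
  intro i j hij
  have hD0 : ∀ l, ((oneExt P)ᴴ * C) 0 l = C 0 l := by
    intro l
    rw [Matrix.mul_apply, Fin.sum_univ_succ]
    simp [Matrix.conjTranspose_apply]
  have hDs : ∀ (i' : Fin m') l, ((oneExt P)ᴴ * C) i'.succ l
      = ∑ k : Fin m', (starRingEnd ℂ) (P k i') * C k.succ l := by
    intro i' l
    rw [Matrix.mul_apply, Fin.sum_univ_succ]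
    simp [Matrix.conjTranspose_apply]
  rw [Matrix.mul_apply, Fin.sum_univ_succ]
  revert hij
  refine Fin.cases ?_ (fun i' => ?_) i <;> refine Fin.cases ?_ (fun j' => ?_) j <;> intro hij
  · simp at hij
  · -- i = 0, j = j'.succ
    rw [hD0]
    simp only [oneExt_zero_succ, oneExt_succ_succ, mul_zero, zero_add]
    refine Finset.sum_eq_zero fun l _ => ?_
    rw [hD0, hrow _ (Fin.succ_ne_zero l), zero_mul]
  · -- i = i'.succ, j = 0
    simp only [oneExt_succ_zero, oneExt_zero_zero, mul_one, mul_zero,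
      Finset.sum_const_zero, add_zero]
    rw [hDs]
    exact Finset.sum_eq_zero fun k _ => by rw [hcol _ (Fin.succ_ne_zero k), mul_zero]
  · -- i = i'.succ, j = j'.succ
    have h1 : ((oneExt P)ᴴ * C) i'.succ 0 = 0 := by
      rw [hDs]
      exact Finset.sum_eq_zero fun k _ => by rw [hcol _ (Fin.succ_ne_zero k), mul_zero]
    rw [h1]
    simp only [oneExt_succ_succ, zero_mul, zero_add]
    have hij' : (i' : ℕ) ≠ (j' : ℕ) := by
      intro h; apply hij; simp [Fin.val_succ, h]
    have hgoal := hPQ i' j' hij'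
    rw [Matrix.mul_apply] at hgoal
    rw [← hgoal]
    refine Finset.sum_congr rfl fun l _ => ?_
    rw [hDs, Matrix.mul_apply]
    simp [Matrix.conjTranspose_apply, Matrix.submatrix_apply]

/-- The conclusion of the simultaneous SVD theorem, as a predicate. -/
abbrev SimDiagConcl (m n : ℕ) (A B : Matrix (Fin m) (Fin n) ℂ) : Prop :=
  ∃ (U : Matrix.unitaryGroup (Fin m) ℂ) (V : Matrix.unitaryGroup (Fin n) ℂ),
    (∀ (i : Fin m) (j : Fin n), (i : ℕ) ≠ (j : ℕ) →
      ((U : Matrix (Fin m) (Fin m) ℂ)ᴴ * A * (V : Matrix (Fin n) (Fin n) ℂ)) i j = 0) ∧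
    (∀ (i : Fin m) (j : Fin n), (i : ℕ) ≠ (j : ℕ) →
      ((U : Matrix (Fin m) (Fin m) ℂ)ᴴ * B * (V : Matrix (Fin n) (Fin n) ℂ)) i j = 0)

set_option maxHeartbeats 1000000 in
lemma simdiag_step {m' n' : ℕ} (A B : Matrix (Fin (m' + 1)) (Fin (n' + 1)) ℂ)
    (h1 : A * Bᴴ = B * Aᴴ) (h2 : Aᴴ * B = Bᴴ * A) (hA : A ≠ 0)
    (IH : ∀ (A'' B'' : Matrix (Fin m') (Fin n') ℂ),
      A'' * B''ᴴ = B'' * A''ᴴ → A''ᴴ * B'' = B''ᴴ * A'' → SimDiagConcl m' n' A'' B'') :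
    SimDiagConcl (m' + 1) (n' + 1) A B := by
  classical
  obtain ⟨x, y, a, b, c, d, hx, hy, hAy, hBy, hAx, hBx⟩ := exists_joint_pair A B h1 h2 hA
  obtain ⟨U₀, cU, hcU, hUcol⟩ := exists_unitary_col x hx
  obtain ⟨V₀, cV, hcV, hVcol⟩ := exists_unitary_col y hy
  set Uc : Matrix (Fin (m' + 1)) (Fin (m' + 1)) ℂ := (U₀ : Matrix (Fin (m' + 1)) (Fin (m' + 1)) ℂ) with hUc
  set Vc : Matrix (Fin (n' + 1)) (Fin (n' + 1)) ℂ := (V₀ : Matrix (Fin (n' + 1)) (Fin (n' + 1)) ℂ) with hVc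
  have hU1 : Uc * Ucᴴ = 1 := by
    have := U₀.2; rw [Matrix.mem_unitaryGroup_iff] at this
    simpa [Matrix.star_eq_conjTranspose] using this
  have hU2 : Ucᴴ * Uc = 1 := by
    have := U₀.2; rw [Matrix.mem_unitaryGroup_iff'] at this
    simpa [Matrix.star_eq_conjTranspose] using this
  have hV1 : Vc * Vcᴴ = 1 := by
    have := V₀.2; rw [Matrix.mem_unitaryGroup_iff] at this
    simpa [Matrix.star_eq_conjTranspose] using this
  have hV2 : Vcᴴ * Vc = 1 := by
    have := V₀.2; rw [Matrix.mem_unitaryGroup_iff'] at this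
    simpa [Matrix.star_eq_conjTranspose] using this
  -- orthogonality of x (resp. y) to the non-first columns of U₀ (resp. V₀)
  have hxorth : ∀ i : Fin (m' + 1), i ≠ 0 →
      ∑ k, (starRingEnd ℂ) (Uc k i) * x k = 0 := by
    intro i hi
    have e1 : ∀ k, x k = cU⁻¹ * Uc k 0 := fun k => by
      rw [hUcol k, inv_mul_cancel_left₀ hcU]
    calc ∑ k, (starRingEnd ℂ) (Uc k i) * x k
        = cU⁻¹ * ∑ k, (starRingEnd ℂ) (Uc k i) * Uc k 0 := by
          rw [Finset.mul_sum]
          exact Finset.sum_congr rfl fun k _ => by rw [e1 k]; ring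
      _ = cU⁻¹ * (Ucᴴ * Uc) i 0 := by
          congr 1
      _ = 0 := by rw [hU2]; simp [Matrix.one_apply, hi]
  have hyorth : ∀ j : Fin (n' + 1), j ≠ 0 →
      ∑ l, (starRingEnd ℂ) (Vc l j) * y l = 0 := by
    intro j hj
    have e1 : ∀ l, y l = cV⁻¹ * Vc l 0 := fun l => by
      rw [hVcol l, inv_mul_cancel_left₀ hcV]
    calc ∑ l, (starRingEnd ℂ) (Vc l j) * y l
        = cV⁻¹ * ∑ l, (starRingEnd ℂ) (Vc l j) * Vc l 0 := by
          rw [Finset.mul_sum]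
          exact Finset.sum_congr rfl fun l _ => by rw [e1 l]; ring
      _ = cV⁻¹ * (Vcᴴ * Vc) j 0 := by
          congr 1
      _ = 0 := by rw [hV2]; simp [Matrix.one_apply, hj]
  have hyorth' : ∀ j : Fin (n' + 1), j ≠ 0 →
      ∑ l, (starRingEnd ℂ) (y l) * Vc l j = 0 := by
    intro j hj
    have : (starRingEnd ℂ) (∑ l, (starRingEnd ℂ) (Vc l j) * y l)
        = ∑ l, (starRingEnd ℂ) (y l) * Vc l j := by
      rw [map_sum]
      exact Finset.sum_congr rfl fun l _ => by simp [mul_comm]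
    rw [← this, hyorth j hj, map_zero]
  set A' : Matrix (Fin (m' + 1)) (Fin (n' + 1)) ℂ := Ucᴴ * A * Vc with hA'def
  set B' : Matrix (Fin (m' + 1)) (Fin (n' + 1)) ℂ := Ucᴴ * B * Vc with hB'def
  -- first column of A' and B' vanishes off the corner
  have hcolgen : ∀ (M : Matrix (Fin (m' + 1)) (Fin (n' + 1)) ℂ) (t : ℂ),
      M *ᵥ y = t • x → ∀ i : Fin (m' + 1), i ≠ 0 → (Ucᴴ * M * Vc) i 0 = 0 := by
    intro M t hMy i hi
    rw [Matrix.mul_assoc, Matrix.mul_apply]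
    have e1 : ∀ k, (M * Vc) k 0 = cV * t * x k := by
      intro k
      rw [Matrix.mul_apply]
      calc ∑ l, M k l * Vc l 0 = cV * ∑ l, M k l * y l := by
            rw [Finset.mul_sum]
            exact Finset.sum_congr rfl fun l _ => by rw [hVcol l]; ring
        _ = cV * (M *ᵥ y) k := rfl
        _ = cV * t * x k := by rw [hMy]; simp [mul_assoc]
    calc ∑ k, Ucᴴ i k * (M * Vc) k 0
        = cV * t * ∑ k, (starRingEnd ℂ) (Uc k i) * x k := by
          rw [Finset.mul_sum]
          exact Finset.sum_congr rfl fun k _ => by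
            rw [e1 k, Matrix.conjTranspose_apply]
            simp only [RCLike.star_def]; ring
      _ = 0 := by rw [hxorth i hi, mul_zero]
  have hrowgen : ∀ (M : Matrix (Fin (m' + 1)) (Fin (n' + 1)) ℂ) (t : ℂ),
      Mᴴ *ᵥ x = t • y → ∀ j : Fin (n' + 1), j ≠ 0 → (Ucᴴ * M * Vc) 0 j = 0 := by
    intro M t hMx j hj
    rw [Matrix.mul_apply]
    have e1 : ∀ l, (Ucᴴ * M) 0 l = (starRingEnd ℂ) (cU * t) * (starRingEnd ℂ) (y l) := by
      intro l
      rw [Matrix.mul_apply]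
      have e2 : ∀ k, Ucᴴ 0 k * M k l
          = (starRingEnd ℂ) cU * ((starRingEnd ℂ) (x k) * M k l) := by
        intro k
        rw [Matrix.conjTranspose_apply, hUcol k]
        simp only [RCLike.star_def, _root_.map_mul]; ring
      rw [Finset.sum_congr rfl fun k _ => e2 k, ← Finset.mul_sum]
      have e3 : ∑ k, (starRingEnd ℂ) (x k) * M k l
          = (starRingEnd ℂ) ((Mᴴ *ᵥ x) l) := by
        rw [Matrix.mulVec, dotProduct]
        rw [map_sum]
        exact Finset.sum_congr rfl fun k _ => by
          rw [Matrix.conjTranspose_apply]; simp [mul_comm]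
      rw [e3, hMx]
      simp only [Pi.smul_apply, smul_eq_mul, _root_.map_mul]
      ring
    calc ∑ l, (Ucᴴ * M) 0 l * Vc l j
        = (starRingEnd ℂ) (cU * t) * ∑ l, (starRingEnd ℂ) (y l) * Vc l j := by
          rw [Finset.mul_sum]
          exact Finset.sum_congr rfl fun l _ => by rw [e1 l]; ring
      _ = 0 := by rw [hyorth' j hj, mul_zero]
  have hA'col : ∀ i, i ≠ 0 → A' i 0 = 0 := hcolgen A a hAy
  have hB'col : ∀ i, i ≠ 0 → B' i 0 = 0 := hcolgen B b hBy
  have hA'row : ∀ j, j ≠ 0 → A' 0 j = 0 := hrowgen A c hAx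
  have hB'row : ∀ j, j ≠ 0 → B' 0 j = 0 := hrowgen B d hBx
  -- the commutation conditions transfer to A', B'
  have h1' : A' * B'ᴴ = B' * A'ᴴ := by
    rw [hA'def, hB'def]
    simp only [Matrix.conjTranspose_mul, Matrix.conjTranspose_conjTranspose]
    simp only [← Matrix.mul_assoc]
    rw [Matrix.mul_assoc (Ucᴴ * A) Vc Vcᴴ, Matrix.mul_assoc (Ucᴴ * B) Vc Vcᴴ, hV1,
      Matrix.mul_one, Matrix.mul_one, Matrix.mul_assoc Ucᴴ A Bᴴ, Matrix.mul_assoc Ucᴴ B Aᴴ, h1]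
  have h2' : A'ᴴ * B' = B'ᴴ * A' := by
    rw [hA'def, hB'def]
    simp only [Matrix.conjTranspose_mul, Matrix.conjTranspose_conjTranspose]
    simp only [← Matrix.mul_assoc]
    rw [Matrix.mul_assoc (Vcᴴ * Aᴴ) Uc Ucᴴ, Matrix.mul_assoc (Vcᴴ * Bᴴ) Uc Ucᴴ, hU1,
      Matrix.mul_one, Matrix.mul_one, Matrix.mul_assoc Vcᴴ Aᴴ B, Matrix.mul_assoc Vcᴴ Bᴴ A, h2]
  set A'' := A'.submatrix Fin.succ Fin.succ with hA''def
  set B'' := B'.submatrix Fin.succ Fin.succ with hB''def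
  have h1'' : A'' * B''ᴴ = B'' * A''ᴴ := by
    ext i j
    have e1 : (A'' * B''ᴴ) i j = (A' * B'ᴴ) i.succ j.succ := by
      rw [Matrix.mul_apply, Matrix.mul_apply, Fin.sum_univ_succ,
        Matrix.conjTranspose_apply, hA'col _ (Fin.succ_ne_zero i), zero_mul, zero_add]
      exact Finset.sum_congr rfl fun k _ => by
        simp [hA''def, hB''def, Matrix.conjTranspose_apply, Matrix.submatrix_apply]
    have e2 : (B'' * A''ᴴ) i j = (B' * A'ᴴ) i.succ j.succ := by
      rw [Matrix.mul_apply, Matrix.mul_apply, Fin.sum_univ_succ,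
        Matrix.conjTranspose_apply, hB'col _ (Fin.succ_ne_zero i), zero_mul, zero_add]
      exact Finset.sum_congr rfl fun k _ => by
        simp [hA''def, hB''def, Matrix.conjTranspose_apply, Matrix.submatrix_apply]
    rw [e1, e2, h1']
  have h2'' : A''ᴴ * B'' = B''ᴴ * A'' := by
    ext i j
    have e1 : (A''ᴴ * B'') i j = (A'ᴴ * B') i.succ j.succ := by
      rw [Matrix.mul_apply, Matrix.mul_apply, Fin.sum_univ_succ,
        Matrix.conjTranspose_apply, hA'row _ (Fin.succ_ne_zero i), star_zero, zero_mul, zero_add]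
      exact Finset.sum_congr rfl fun k _ => by
        simp [hA''def, hB''def, Matrix.conjTranspose_apply, Matrix.submatrix_apply]
    have e2 : (B''ᴴ * A'') i j = (B'ᴴ * A') i.succ j.succ := by
      rw [Matrix.mul_apply, Matrix.mul_apply, Fin.sum_univ_succ,
        Matrix.conjTranspose_apply, hB'row _ (Fin.succ_ne_zero i), star_zero, zero_mul, zero_add]
      exact Finset.sum_congr rfl fun k _ => by
        simp [hA''def, hB''def, Matrix.conjTranspose_apply, Matrix.submatrix_apply]
    rw [e1, e2, h2']
  obtain ⟨U₁, V₁, hU₁A, hU₁B⟩ := IH A'' B'' h1'' h2''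
  set EU : Matrix.unitaryGroup (Fin (m' + 1)) ℂ :=
    ⟨oneExt (U₁ : Matrix _ _ ℂ), oneExt_mem _ U₁.2⟩ with hEU
  set FV : Matrix.unitaryGroup (Fin (n' + 1)) ℂ :=
    ⟨oneExt (V₁ : Matrix _ _ ℂ), oneExt_mem _ V₁.2⟩ with hFV
  refine ⟨U₀ * EU, V₀ * FV, ?_, ?_⟩
  · intro i j hij
    have key : ((↑(U₀ * EU) : Matrix (Fin (m' + 1)) (Fin (m' + 1)) ℂ)ᴴ * A *
        (↑(V₀ * FV) : Matrix (Fin (n' + 1)) (Fin (n' + 1)) ℂ))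
        = (oneExt (U₁ : Matrix (Fin m') (Fin m') ℂ))ᴴ * A' * oneExt (V₁ : Matrix (Fin n') (Fin n') ℂ) := by
      have hc1 : (↑(U₀ * EU) : Matrix (Fin (m' + 1)) (Fin (m' + 1)) ℂ)
          = Uc * oneExt (U₁ : Matrix (Fin m') (Fin m') ℂ) := by
        rw [MulMemClass.coe_mul]
      have hc2 : (↑(V₀ * FV) : Matrix (Fin (n' + 1)) (Fin (n' + 1)) ℂ)
          = Vc * oneExt (V₁ : Matrix (Fin n') (Fin n') ℂ) := by
        rw [MulMemClass.coe_mul]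
      rw [hc1, hc2, Matrix.conjTranspose_mul, hA'def]
      simp only [Matrix.mul_assoc]
    rw [key]
    exact assemble A' _ _ hA'col hA'row hU₁A i j hij
  · intro i j hij
    have key : ((↑(U₀ * EU) : Matrix (Fin (m' + 1)) (Fin (m' + 1)) ℂ)ᴴ * B *
        (↑(V₀ * FV) : Matrix (Fin (n' + 1)) (Fin (n' + 1)) ℂ))
        = (oneExt (U₁ : Matrix (Fin m') (Fin m') ℂ))ᴴ * B' * oneExt (V₁ : Matrix (Fin n') (Fin n') ℂ) := by
      have hc1 : (↑(U₀ * EU) : Matrix (Fin (m' + 1)) (Fin (m' + 1)) ℂ)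
          = Uc * oneExt (U₁ : Matrix (Fin m') (Fin m') ℂ) := by
        rw [MulMemClass.coe_mul]
      have hc2 : (↑(V₀ * FV) : Matrix (Fin (n' + 1)) (Fin (n' + 1)) ℂ)
          = Vc * oneExt (V₁ : Matrix (Fin n') (Fin n') ℂ) := by
        rw [MulMemClass.coe_mul]
      rw [hc1, hc2, Matrix.conjTranspose_mul, hB'def]
      simp only [Matrix.mul_assoc]
    rw [key]
    exact assemble B' _ _ hB'col hB'row hU₁B i j hij


/-- The main induction: simultaneous diagonalization, by strong induction on `m + n`. -/
lemma simdiag_key : ∀ (Nb m n : ℕ), m + n ≤ Nb →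
    ∀ (A B : Matrix (Fin m) (Fin n) ℂ),
      A * Bᴴ = B * Aᴴ → Aᴴ * B = Bᴴ * A → SimDiagConcl m n A B := by
  intro Nb
  induction Nb with
  | zero =>
    intro m n hmn A B h1 h2
    have hm : m = 0 := by omega
    subst hm
    exact ⟨1, 1, fun i => i.elim0, fun i => i.elim0⟩
  | succ Nb ih =>
    intro m n hmn A B h1 h2
    cases m with
    | zero => exact ⟨1, 1, fun i => i.elim0, fun i => i.elim0⟩
    | succ m' =>
      cases n with
      | zero => exact ⟨1, 1, fun i j => j.elim0, fun i j => j.elim0⟩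
      | succ n' =>
        have hIH : ∀ (A'' B'' : Matrix (Fin m') (Fin n') ℂ),
            A'' * B''ᴴ = B'' * A''ᴴ → A''ᴴ * B'' = B''ᴴ * A'' →
            SimDiagConcl m' n' A'' B'' := by
          intro A'' B'' g1 g2
          exact ih m' n' (by omega) A'' B'' g1 g2
        by_cases hA : A = 0
        · by_cases hB : B = 0
          · refine ⟨1, 1, ?_, ?_⟩ <;> intro i j hij <;> simp [hA, hB]
          · obtain ⟨U, V, hBc, hAc⟩ := simdiag_step B A h1.symm h2.symm hB hIH
            exact ⟨U, V, hAc, hBc⟩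
        · exact simdiag_step A B h1 h2 hA hIH

/-- Simultaneous singular value decomposition: if AB* = BA* and A*B = B*A,
then A and B are simultaneously unitarily equivalent to rectangular diagonal
matrices. -/
theorem simultaneous_svd
    {m n : ℕ} (A B : Matrix (Fin m) (Fin n) ℂ)
    (h1 : A * Bᴴ = B * Aᴴ) (h2 : Aᴴ * B = Bᴴ * A) :
    ∃ (U : Matrix.unitaryGroup (Fin m) ℂ) (V : Matrix.unitaryGroup (Fin n) ℂ),
      (∀ (i : Fin m) (j : Fin n), (i : ℕ) ≠ (j : ℕ) →
        ((U : Matrix (Fin m) (Fin m) ℂ)ᴴ * A * (V : Matrix (Fin n) (Fin n) ℂ)) i j = 0) ∧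
      (∀ (i : Fin m) (j : Fin n), (i : ℕ) ≠ (j : ℕ) →
        ((U : Matrix (Fin m) (Fin m) ℂ)ᴴ * B * (V : Matrix (Fin n) (Fin n) ℂ)) i j = 0) := by
  exact simdiag_key (m + n) m n le_rfl A B h1 h2
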